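/- Let m ≥ 3, let K = {(i_1,i_2), (i_2,i_3), ..., (i_{ℓ-1},i_ℓ), (i_ℓ,i_1)} be a directed cycle on pairwise distinct vertices i_1,...,i_ℓ ∈ V with 1 < ℓ = |K| < m, and let U ⊊ K be any strict subset of K. Then the extended subtour elimination inequality ∑_{(i,j) ∈ K} z_{i,j} + ∑_{(i,j) ∈ U} y_{i,j} ≤ |K| - 1 is valid for the cycle clustering polytope CCP(n,m); equivalently, for every surjective map κ : V → ZMod m, it is impossible that for every arc (i,j) ∈ K either κ(j) = κ(i) + 1, or (i,j) ∈ U and κ(i) = κ(j). -/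

import Mathlib

open scoped BigOperators

noncomputable section

/-- Coordinate index set for the incidence vectors of cycle clusterings:
`x`-variables indexed by `(i,s)`, `y`-variables indexed by pairs `i < j`,
and `z`-variables indexed by arcs `i ≠ j`. -/
abbrev CCIdx (n m : ℕ) : Type :=
  (Fin n × ZMod m) ⊕ {p : Fin n × Fin n // p.1 < p.2} ⊕ {p : Fin n × Fin n // p.1 ≠ p.2}

/-- Index of the variable `x_{i,s}`. -/
def xIdx {n m : ℕ} (i : Fin n) (s : ZMod m) : CCIdx n m := Sum.inl (i, s)

/-- Index of the variable `y_{i,j}` (with the convention `y_{i,j} = y_{j,i}`). -/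
def yIdx {n m : ℕ} (i j : Fin n) (h : i ≠ j) : CCIdx n m :=
  if hij : i < j then Sum.inr (Sum.inl ⟨(i, j), hij⟩)
  else Sum.inr (Sum.inl ⟨(j, i), lt_of_le_of_ne (not_lt.mp hij) h.symm⟩)

/-- Index of the variable `z_{i,j}`. -/
def zIdx {n m : ℕ} (i j : Fin n) (h : i ≠ j) : CCIdx n m := Sum.inr (Sum.inr ⟨(i, j), h⟩)

/-- Incidence vector of a clustering `κ : V → ZMod m`:
`x_{i,s} = 1` iff `κ i = s`, `y_{i,j} = 1` iff `κ i = κ j`,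
`z_{i,j} = 1` iff `κ j = κ i + 1`. -/
def incVec {n m : ℕ} (κ : Fin n → ZMod m) : CCIdx n m → ℝ :=
  Sum.elim (fun p => if κ p.1 = p.2 then 1 else 0)
    (Sum.elim (fun p => if κ p.val.1 = κ p.val.2 then 1 else 0)
      (fun p => if κ p.val.2 = κ p.val.1 + 1 then 1 else 0))

/-- The cycle clustering polytope `CCP(n,m)`: the convex hull of the incidence
vectors of all feasible clusterings, i.e. all surjective maps `κ : V → ZMod m`. -/
def CCP (n m : ℕ) : Set (CCIdx n m → ℝ) :=
  convexHull ℝ {v | ∃ κ : Fin n → ZMod m, Function.Surjective κ ∧ v = incVec κ}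

/-- The `x_{i,s}`-coordinate of a point. -/
def Xc {n m : ℕ} (v : CCIdx n m → ℝ) (i : Fin n) (s : ZMod m) : ℝ := v (xIdx i s)

/-- The `y_{i,j}`-coordinate of a point (junk value `0` on the diagonal). -/
def Yc {n m : ℕ} (v : CCIdx n m → ℝ) (i j : Fin n) : ℝ :=
  if h : i ≠ j then v (yIdx i j h) else 0

/-- The `z_{i,j}`-coordinate of a point (junk value `0` on the diagonal). -/
def Zc {n m : ℕ} (v : CCIdx n m → ℝ) (i j : Fin n) : ℝ :=
  if h : i ≠ j then v (zIdx i j h) else 0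

/-- The dimension of (the affine hull of) `CCP(n,m)`. -/
def ccpDim (n m : ℕ) : ℕ :=
  Module.finrank ℝ (affineSpan ℝ (CCP n m)).direction

/-- For `m ≥ 3`, a directed cycle `(c 0, c 1), …, (c (ℓ-1), c 0)` on pairwise
distinct vertices with `1 < ℓ < m`, and a strict subset `U` of its arcs
(encoded by its index set `U ⊂ {0, …, ℓ-1}`), the extended subtour elimination
inequality `∑_{(i,j)∈K} z_{i,j} + ∑_{(i,j)∈U} y_{i,j} ≤ |K| - 1` is valid for
`CCP(n,m)`; equivalently, for every surjective `κ : V → ZMod m` it is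
impossible that for every arc `(i,j)` of the cycle either `κ j = κ i + 1`, or
the arc lies in `U` and `κ i = κ j`. -/
lemma Yc_incVec {n m : ℕ} (κ : Fin n → ZMod m) (i j : Fin n) (h : i ≠ j) :
    Yc (incVec κ) i j = if κ i = κ j then 1 else 0 := by
  rw [Yc, dif_pos h, yIdx]
  by_cases h1 : i < j
  · rw [dif_pos h1]; rfl
  · rw [dif_neg h1]
    show (if κ j = κ i then (1:ℝ) else 0) = _
    by_cases hk : κ i = κ j
    · simp [hk]
    · have hk2 : ¬ κ j = κ i := fun h' => hk h'.symm
      simp [hk, hk2]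

lemma Zc_incVec {n m : ℕ} (κ : Fin n → ZMod m) (i j : Fin n) (h : i ≠ j) :
    Zc (incVec κ) i j = if κ j = κ i + 1 then 1 else 0 := by
  rw [Zc, dif_pos h, zIdx]; rfl

lemma Zc_comb {n m : ℕ} (v w : CCIdx n m → ℝ) (a b : ℝ) (i j : Fin n) :
    Zc (a • v + b • w) i j = a * Zc v i j + b * Zc w i j := by
  rw [Zc, Zc, Zc]
  split
  · simp [smul_eq_mul]
  · ring

lemma Yc_comb {n m : ℕ} (v w : CCIdx n m → ℝ) (a b : ℝ) (i j : Fin n) :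
    Yc (a • v + b • w) i j = a * Yc v i j + b * Yc w i j := by
  rw [Yc, Yc, Yc]
  split
  · simp [smul_eq_mul]
  · ring

lemma esi_core (n m ℓ : ℕ) (hm : 3 ≤ m) (hℓ : 1 < ℓ) (hℓm : ℓ < m) (c : ℕ → Fin n)
    (U : Finset ℕ) (hU : U ⊂ Finset.range ℓ) (κ : Fin n → ZMod m)
    (H : ∀ t < ℓ, κ (c ((t + 1) % ℓ)) = κ (c t) + 1 ∨
          (t ∈ U ∧ κ (c t) = κ (c ((t + 1) % ℓ)))) : False := by
  haveI : NeZero m := ⟨by omega⟩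
  haveI : Fact (1 < m) := ⟨by omega⟩
  set d : ℕ → ℕ := fun t => if κ (c ((t + 1) % ℓ)) = κ (c t) + 1 then 1 else 0 with hd
  have step : ∀ t < ℓ, κ (c ((t + 1) % ℓ)) = κ (c t) + (d t : ZMod m) := by
    intro t ht
    rcases H t ht with h | ⟨_, h⟩
    · simp [hd, h]
    · have hne : ¬ κ (c ((t + 1) % ℓ)) = κ (c t) + 1 := by
        intro hc
        rw [h] at hc
        exact one_ne_zero (left_eq_add.mp hc)
      simp [hd, hne, h]
  have tel : ∀ k, k ≤ ℓ →
      κ (c (k % ℓ)) = κ (c 0) + ((∑ t ∈ Finset.range k, d t : ℕ) : ZMod m) := by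
    intro k
    induction k with
    | zero => intro _; simp
    | succ k ih =>
      intro hk
      have hkℓ : k < ℓ := hk
      have h1 := step k hkℓ
      have h2 := ih (le_of_lt hkℓ)
      rw [Nat.mod_eq_of_lt hkℓ] at h2
      rw [h1, h2, Finset.sum_range_succ]
      push_cast
      ring
  have hsum0 : ((∑ t ∈ Finset.range ℓ, d t : ℕ) : ZMod m) = 0 := by
    have h := tel ℓ le_rfl
    rw [Nat.mod_self] at h
    exact left_eq_add.mp h
  have hdvd : m ∣ ∑ t ∈ Finset.range ℓ, d t :=
    (ZMod.natCast_eq_zero_iff _ _).mp hsum0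
  have hle : ∑ t ∈ Finset.range ℓ, d t ≤ ℓ := by
    calc ∑ t ∈ Finset.range ℓ, d t ≤ ∑ _t ∈ Finset.range ℓ, 1 :=
          Finset.sum_le_sum (fun t _ => by simp only [hd]; split <;> omega)
      _ = ℓ := by simp
  have hz : ∑ t ∈ Finset.range ℓ, d t = 0 :=
    Nat.eq_zero_of_dvd_of_lt hdvd (lt_of_le_of_lt hle hℓm)
  have hall : ∀ t ∈ Finset.range ℓ, d t = 0 := Finset.sum_eq_zero_iff.mp hz
  have hsub : Finset.range ℓ ⊆ U := by
    intro t ht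
    have htℓ : t < ℓ := Finset.mem_range.mp ht
    rcases H t htℓ with h | ⟨hU', _⟩
    · have h0 := hall t ht
      simp [hd, h] at h0
    · exact hU'
  rw [Finset.ssubset_def] at hU
  exact hU.2 hsub

lemma esi_vertex (n m ℓ : ℕ) (hm : 3 ≤ m) (hℓ : 1 < ℓ) (hℓm : ℓ < m) (c : ℕ → Fin n)
    (hinj : ∀ t₁ < ℓ, ∀ t₂ < ℓ, c t₁ = c t₂ → t₁ = t₂)
    (U : Finset ℕ) (hU : U ⊂ Finset.range ℓ) (κ : Fin n → ZMod m) :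
    ∑ t ∈ Finset.range ℓ, Zc (incVec κ) (c t) (c ((t + 1) % ℓ))
      + ∑ t ∈ U, Yc (incVec κ) (c t) (c ((t + 1) % ℓ)) ≤ (ℓ : ℝ) - 1 := by
  haveI : Fact (1 < m) := ⟨by omega⟩
  have hne : ∀ t < ℓ, c t ≠ c ((t + 1) % ℓ) := by
    intro t ht heq
    have hlt : (t + 1) % ℓ < ℓ := Nat.mod_lt _ (by omega)
    have heqt := hinj t ht _ hlt heq
    have hmod : (t + 1) % ℓ = t + 1 ∨ ((t + 1) % ℓ = 0 ∧ t + 1 = ℓ) := by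
      rcases Nat.lt_or_ge (t + 1) ℓ with h | h
      · left; exact Nat.mod_eq_of_lt h
      · right
        have h2 : t + 1 = ℓ := by omega
        refine ⟨?_, h2⟩
        rw [h2, Nat.mod_self]
    omega
  set f : ℕ → ℝ := fun t =>
    (if κ (c ((t + 1) % ℓ)) = κ (c t) + 1 then (1:ℝ) else 0)
      + (if t ∈ U then (if κ (c t) = κ (c ((t + 1) % ℓ)) then (1:ℝ) else 0) else 0) with hf
  have htotal : ∑ t ∈ Finset.range ℓ, Zc (incVec κ) (c t) (c ((t + 1) % ℓ))
      + ∑ t ∈ U, Yc (incVec κ) (c t) (c ((t + 1) % ℓ)) = ∑ t ∈ Finset.range ℓ, f t := by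
    rw [hf, Finset.sum_add_distrib]
    congr 1
    · exact Finset.sum_congr rfl fun t ht =>
        Zc_incVec κ _ _ (hne t (Finset.mem_range.mp ht))
    · rw [Finset.sum_ite_mem, Finset.inter_eq_right.mpr hU.subset]
      exact Finset.sum_congr rfl fun t ht =>
        Yc_incVec κ _ _ (hne t (Finset.mem_range.mp (hU.subset ht)))
  have hb : ∀ t, f t ≤ 1 := by
    intro t
    rw [hf]
    simp only
    split_ifs with h1 h2 h3
    · exfalso
      rw [h3] at h1
      exact one_ne_zero (left_eq_add.mp h1)
    · norm_num
    · norm_num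
    · norm_num
    · norm_num
    · norm_num
  have hnot : ¬ ∀ t < ℓ, κ (c ((t + 1) % ℓ)) = κ (c t) + 1 ∨
      (t ∈ U ∧ κ (c t) = κ (c ((t + 1) % ℓ))) :=
    fun H => esi_core n m ℓ hm hℓ hℓm c U hU κ H
  push_neg at hnot
  obtain ⟨t0, ht0, hA, hB⟩ := hnot
  have hf0 : f t0 = 0 := by
    rw [hf]
    simp only
    rw [if_neg hA]
    by_cases hu : t0 ∈ U
    · rw [if_pos hu, if_neg (hB hu)]; norm_num
    · rw [if_neg hu]; norm_num
  have ht0r : t0 ∈ Finset.range ℓ := Finset.mem_range.mpr ht0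
  rw [htotal]
  calc ∑ t ∈ Finset.range ℓ, f t
      = f t0 + ∑ t ∈ (Finset.range ℓ).erase t0, f t :=
        (Finset.add_sum_erase _ f ht0r).symm
    _ ≤ 0 + ∑ _t ∈ (Finset.range ℓ).erase t0, (1:ℝ) := by
        gcongr
        · exact le_of_eq hf0
        · exact hb _
    _ = (ℓ : ℝ) - 1 := by
        rw [zero_add, Finset.sum_const, nsmul_eq_mul, mul_one,
          Finset.card_erase_of_mem ht0r, Finset.card_range,
          Nat.cast_sub (by omega : 1 ≤ ℓ), Nat.cast_one]

theorem extended_subtour_inequality (n m ℓ : ℕ) (hm : 3 ≤ m) (hℓ : 1 < ℓ)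
    (hℓm : ℓ < m) (c : ℕ → Fin n)
    (hinj : ∀ t₁ < ℓ, ∀ t₂ < ℓ, c t₁ = c t₂ → t₁ = t₂)
    (U : Finset ℕ) (hU : U ⊂ Finset.range ℓ) :
    (∀ v ∈ CCP n m,
      ∑ t ∈ Finset.range ℓ, Zc v (c t) (c ((t + 1) % ℓ))
        + ∑ t ∈ U, Yc v (c t) (c ((t + 1) % ℓ)) ≤ (ℓ : ℝ) - 1) ∧
    (∀ κ : Fin n → ZMod m, Function.Surjective κ →
      ¬ (∀ t < ℓ, κ (c ((t + 1) % ℓ)) = κ (c t) + 1 ∨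
            (t ∈ U ∧ κ (c t) = κ (c ((t + 1) % ℓ))))) := by
  constructor
  · set S : (CCIdx n m → ℝ) → ℝ := fun v =>
      ∑ t ∈ Finset.range ℓ, Zc v (c t) (c ((t + 1) % ℓ))
        + ∑ t ∈ U, Yc v (c t) (c ((t + 1) % ℓ)) with hS
    have hlin : ∀ (v w : CCIdx n m → ℝ) (a b : ℝ),
        S (a • v + b • w) = a * S v + b * S w := by
      intro v w a b
      simp only [hS, Zc_comb, Yc_comb, Finset.sum_add_distrib, mul_add, Finset.mul_sum]
      ring
    have hconv : Convex ℝ {v : CCIdx n m → ℝ | S v ≤ (ℓ : ℝ) - 1} := by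
      intro p hp q hq a b ha hb hab
      simp only [Set.mem_setOf_eq] at hp hq ⊢
      rw [hlin p q a b]
      nlinarith
    have hsub : {v | ∃ κ : Fin n → ZMod m, Function.Surjective κ ∧ v = incVec κ}
        ⊆ {v : CCIdx n m → ℝ | S v ≤ (ℓ : ℝ) - 1} := by
      rintro v ⟨κ, -, rfl⟩
      exact esi_vertex n m ℓ hm hℓ hℓm c hinj U hU κ
    intro v hv
    exact convexHull_min hsub hconv hv
  · intro κ _ H
    exact esi_core n m ℓ hm hℓ hℓm c U hU κ H

end
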